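/- Let $X_i^m$ ($i \geq 1$, $m \geq 1$) be, for each $m$, i.i.d. real random variables, and let $X$ be a real random variable with $\mathbb{E}(X) > 0$, such that for every $\lambda \in \mathbb{R}$ the Laplace transform $\mathbb{E}(e^{-\lambda X_1^m})$ converges to $\mathbb{E}(e^{-\lambda X})$ as $m \to \infty$. Then for any real $a$ with $0 < a < \mathbb{E}(X)$, there exist $\theta > 0$ and $m_0 \geq 0$ such that for all $m \geq m_0$ and all $k \geq 0$, writing $S_k^m = \sum_{i=1}^k X_i^m$, one has $\mathbb{P}(S_k^m < k a) \leq e^{-k\theta}$. -/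

import Mathlib

open MeasureTheory Finset Filter

lemma exp_mul_one_sub_le (v : ℝ) : Real.exp v * (1 - v) ≤ 1 := by
  have h := Real.add_one_le_exp (-v)
  rw [Real.exp_neg] at h
  have := mul_le_mul_of_nonneg_left h (Real.exp_pos v).le
  rw [mul_inv_cancel₀ (Real.exp_pos v).ne'] at this
  nlinarith

lemma exp_le_quadratic (u : ℝ) : Real.exp u ≤ 1 + u + u ^ 2 * Real.exp |u| := by
  rcases le_or_gt u 0 with hu | hu
  · have h1 : Real.exp u ≤ 1 + u + u ^ 2 := by
      nlinarith [exp_mul_one_sub_le u, Real.exp_pos u]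
    have h2 : (1 : ℝ) ≤ Real.exp |u| := Real.one_le_exp (abs_nonneg u)
    nlinarith [sq_nonneg u]
  · rw [abs_of_pos hu]
    nlinarith [exp_mul_one_sub_le u, Real.exp_pos u]

lemma sq_le_four_exp (x : ℝ) : x ^ 2 ≤ 4 * Real.exp |x| := by
  have h := Real.add_one_le_exp (|x| / 2)
  have h2 : Real.exp (|x| / 2) ^ 2 = Real.exp |x| := by
    rw [← Real.exp_nat_mul]
    push_cast
    ring_nf
  nlinarith [abs_nonneg x, sq_abs x, Real.exp_pos (|x| / 2)]

/-- Chernoff-type bound, uniform in `m`: if for each `m` the `(X_i^m)_i` are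
i.i.d. real random variables whose Laplace transforms `𝔼(e^{-λ X₁^m})`
converge, as `m → ∞`, to that of a random variable `X` with `𝔼(X) > 0`, then
for any `0 < a < 𝔼(X)` there exist `θ > 0` and `m₀` such that for all
`m ≥ m₀` and all `k`, `ℙ(S_k^m < k a) ≤ e^{-kθ}`, where
`S_k^m = ∑_{i=1}^k X_i^m`. -/
theorem stmt_0 {Ω : Type*} [MeasurableSpace Ω] (μ : Measure Ω)
    [IsProbabilityMeasure μ] (X : ℕ → ℕ → Ω → ℝ) (X₀ : Ω → ℝ)
    (hmeas : ∀ m i, Measurable (X m i)) (hmeas₀ : Measurable X₀)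
    (hindep : ∀ m, ProbabilityTheory.iIndepFun (X m) μ)
    (hident : ∀ m i, ProbabilityTheory.IdentDistrib (X m i) (X m 0) μ μ)
    (hint : ∀ m (l : ℝ), Integrable (fun ω => Real.exp (-l * X m 0 ω)) μ)
    (hint₀ : ∀ l : ℝ, Integrable (fun ω => Real.exp (-l * X₀ ω)) μ)
    (hlap : ∀ l : ℝ,
      Tendsto (fun m => ∫ ω, Real.exp (-l * X m 0 ω) ∂μ) atTop
        (nhds (∫ ω, Real.exp (-l * X₀ ω) ∂μ)))
    (hX₀int : Integrable X₀ μ) (hmean : 0 < ∫ ω, X₀ ω ∂μ) :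
    ∀ a : ℝ, 0 < a → a < ∫ ω, X₀ ω ∂μ →
      ∃ θ : ℝ, 0 < θ ∧ ∃ m₀ : ℕ, ∀ m, m₀ ≤ m → ∀ k : ℕ,
        μ {ω | ∑ i ∈ Finset.range k, X m i ω < k * a} ≤
          ENNReal.ofReal (Real.exp (-(k : ℝ) * θ)) := by
  intro a ha1 ha2
  set M : ℝ := ∫ ω, X₀ ω ∂μ with hM
  set G : Ω → ℝ := fun ω => (X₀ ω) ^ 2 * Real.exp |X₀ ω| with hG
  -- integrability of G
  have hexp2 : Integrable (fun ω => Real.exp (2 * X₀ ω)) μ := by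
    have := hint₀ (-2); norm_num at this; exact this
  have hexp2' : Integrable (fun ω => Real.exp (-2 * X₀ ω)) μ := hint₀ 2
  have hGint : Integrable G μ := by
    refine Integrable.mono'
      (((hexp2.add hexp2').const_mul 4)) ?_ ?_
    · exact ((hmeas₀.pow_const 2).mul hmeas₀.abs.exp).aestronglyMeasurable
    · filter_upwards with ω
      have hsq := sq_le_four_exp (X₀ ω)
      have hee : Real.exp |X₀ ω| * Real.exp |X₀ ω| = Real.exp (2 * |X₀ ω|) := by
        rw [← Real.exp_add]; ring_nf
      have hle : Real.exp (2 * |X₀ ω|) ≤ Real.exp (2 * X₀ ω) + Real.exp (-2 * X₀ ω) := by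
        rcases le_total 0 (X₀ ω) with h | h
        · rw [abs_of_nonneg h]
          linarith [Real.exp_pos (-2 * X₀ ω)]
        · rw [abs_of_nonpos h]
          have : 2 * -X₀ ω = -2 * X₀ ω := by ring
          rw [this]
          linarith [Real.exp_pos (2 * X₀ ω)]
      rw [Real.norm_eq_abs, abs_of_nonneg (by positivity : (0:ℝ) ≤ G ω)]
      show (X₀ ω) ^ 2 * Real.exp |X₀ ω| ≤ _
      simp only [Pi.add_apply]
      nlinarith [Real.exp_pos |X₀ ω|]
  set C : ℝ := ∫ ω, G ω ∂μ with hC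
  have hC0 : 0 ≤ C := integral_nonneg fun ω => by positivity
  -- choice of t
  set t : ℝ := min 1 ((M - a) / (2 * (C + 1))) with htdef
  have ht0 : 0 < t := lt_min one_pos (div_pos (by linarith) (by positivity))
  have ht1 : t ≤ 1 := min_le_left _ _
  have htC : t * (2 * (C + 1)) ≤ M - a := by
    have := min_le_right 1 ((M - a) / (2 * (C + 1)))
    rw [le_div_iff₀ (by positivity)] at this
    calc t * (2 * (C + 1)) ≤ (M - a) / (2 * (C + 1)) * (2 * (C + 1)) := by
          apply mul_le_mul_of_nonneg_right (min_le_right _ _) (by positivity)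
      _ = M - a := by field_simp
  -- Laplace transform bound at t
  set I : ℝ := ∫ ω, Real.exp (-t * X₀ ω) ∂μ with hI
  have hIle : I ≤ 1 + (-t) * M + t ^ 2 * C := by
    have hptw : ∀ ω, Real.exp (-t * X₀ ω) ≤ 1 + (-t) * X₀ ω + t ^ 2 * G ω := by
      intro ω
      have h := exp_le_quadratic (-t * X₀ ω)
      have habs : |(-t) * X₀ ω| = t * |X₀ ω| := by
        rw [abs_mul, abs_neg, abs_of_pos ht0]
      have hexp : Real.exp (t * |X₀ ω|) ≤ Real.exp |X₀ ω| :=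
        Real.exp_le_exp.mpr (by nlinarith [abs_nonneg (X₀ ω)])
      have e1 : (-t * X₀ ω) ^ 2 = t ^ 2 * (X₀ ω) ^ 2 := by ring
      rw [e1, habs] at h
      have := mul_le_mul_of_nonneg_left hexp
        (show (0:ℝ) ≤ t ^ 2 * (X₀ ω) ^ 2 by positivity)
      simp only [hG]
      nlinarith
    have h1 : Integrable (fun ω => 1 + (-t) * X₀ ω) μ :=
      (integrable_const 1).add (hX₀int.const_mul (-t))
    have h2 : Integrable (fun ω => t ^ 2 * G ω) μ := hGint.const_mul (t ^ 2)
    have hRHSint : Integrable (fun ω => 1 + (-t) * X₀ ω + t ^ 2 * G ω) μ := h1.add h2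
    have := integral_mono (hint₀ t) hRHSint hptw
    rwa [integral_add h1 h2,
      integral_add (integrable_const 1) (hX₀int.const_mul (-t)),
      integral_const_mul, integral_const_mul, integral_const, probReal_univ,
      smul_eq_mul, one_mul] at this
  have hIlt : I < 1 - t * a := by
    nlinarith [mul_le_mul_of_nonneg_left htC ht0.le, sq_nonneg t]
  have hIexp : I < Real.exp (-(t * a)) := by
    have := Real.add_one_le_exp (-(t * a))
    linarith
  set r : ℝ := Real.exp (t * a) * I with hr
  have hrlt : r < 1 := by
    have := mul_lt_mul_of_pos_left hIexp (Real.exp_pos (t * a))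
    rwa [← Real.exp_add, add_neg_cancel, Real.exp_zero] at this
  set ρ : ℝ := (max r 0 + 1) / 2 with hρ
  have hρ0 : 0 < ρ := by
    have := le_max_right r 0; simp only [hρ]; linarith
  have hρ1 : ρ < 1 := by
    have := max_lt hrlt one_pos
    simp only [hρ]; linarith
  have hrρ : r < ρ := by
    have := le_max_left r 0; simp only [hρ]; linarith
  refine ⟨-Real.log ρ, by linarith [Real.log_neg hρ0 hρ1], ?_⟩
  have htend : Tendsto (fun m => Real.exp (t * a) * ∫ ω, Real.exp (-t * X m 0 ω) ∂μ)
      atTop (nhds r) := (hlap t).const_mul _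
  obtain ⟨m₀, hm₀⟩ := eventually_atTop.mp (htend.eventually_lt_const hrρ)
  refine ⟨m₀, fun m hm k => ?_⟩
  have hu : Measurable fun x : ℝ => Real.exp (-t * x) :=
    (measurable_id.const_mul (-t)).exp
  have hXiint : ∀ i : ℕ, Integrable (fun ω => Real.exp (-t * X m i ω)) μ := fun i =>
    ((hident m i).comp hu).integrable_iff.mpr (hint m t)
  have hSint : Integrable (fun ω => Real.exp (-t * (∑ i ∈ range k, X m i) ω)) μ :=
    (hindep m).integrable_exp_mul_sum (hmeas m) (fun i _ => hXiint i)
  set Lm : ℝ := ∫ ω, Real.exp (-t * X m 0 ω) ∂μ with hLm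
  have hLm0 : 0 ≤ Lm := integral_nonneg fun ω => (Real.exp_pos _).le
  have hmgf : ∀ i : ℕ, ProbabilityTheory.mgf (X m i) μ (-t) = Lm := fun i => by
    rw [hLm]
    exact ((hident m i).comp hu).integral_eq
  have hmgfsum : ProbabilityTheory.mgf (∑ i ∈ range k, X m i) μ (-t) = Lm ^ k := by
    rw [(hindep m).mgf_sum (hmeas m)]
    rw [Finset.prod_congr rfl fun i _ => hmgf i, Finset.prod_const, Finset.card_range]
  have hcher := ProbabilityTheory.measure_le_le_exp_mul_mgf (μ := μ)
    (X := ∑ i ∈ range k, X m i) ((k : ℝ) * a) (neg_nonpos.mpr ht0.le) hSint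
  rw [hmgfsum, neg_neg] at hcher
  have hfinal : Real.exp (t * ((k : ℝ) * a)) * Lm ^ k ≤ Real.exp (-(k : ℝ) * (-Real.log ρ)) := by
    have e1 : t * ((k : ℝ) * a) = (k : ℕ) * (t * a) := by push_cast; ring
    rw [e1, Real.exp_nat_mul, ← mul_pow]
    have e2 : Real.exp (-(k : ℝ) * (-Real.log ρ)) = ρ ^ k := by
      rw [show (-(k : ℝ) * (-Real.log ρ)) = (k : ℕ) * Real.log ρ by push_cast; ring,
        Real.exp_nat_mul, Real.exp_log hρ0]
    rw [e2]
    exact pow_le_pow_left₀ (mul_nonneg (Real.exp_pos _).le hLm0) (hm₀ m hm).le k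
  calc μ {ω | ∑ i ∈ Finset.range k, X m i ω < ↑k * a}
      ≤ μ {ω | (∑ i ∈ range k, X m i) ω ≤ (k : ℝ) * a} := by
        apply measure_mono
        intro ω hω
        simp only [Set.mem_setOf_eq, Finset.sum_apply] at *
        exact hω.le
    _ = ENNReal.ofReal ((μ {ω | (∑ i ∈ range k, X m i) ω ≤ (k : ℝ) * a}).toReal) :=
        (ENNReal.ofReal_toReal (measure_ne_top μ _)).symm
    _ ≤ ENNReal.ofReal (Real.exp (-(k : ℝ) * (-Real.log ρ))) :=
        ENNReal.ofReal_le_ofReal (hcher.trans hfinal)
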